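/- Let λ ∈ ℂ, p = x − λ ∈ ℂ[x], ι a finite index set, d : ι → ℕ with d(j) ≥ 1 for all j, and V = ⨁_{j ∈ ι} ℂ[x]/(p^{d(j)}). Let i_1 < i_2 < ⋯ < i_m be the distinct values of d, and set Δ_1 = i_1 and Δ_k = i_k − i_{k−1} for k > 1. Then the number of fully invariant subspaces of V equals ∏_{k=1}^{m} (1 + Δ_k). -/

import Mathlib

set_option synthInstance.maxHeartbeats 1000000
set_option maxHeartbeats 1000000

open Polynomial DirectSum

/-- A subspace `W` of `V = ⨁_j ℂ[x]/(p^{d j})` is fully invariant if it is preserved by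
every `ℂ[x]`-module endomorphism of `V`. -/
def FullyInv (lam : ℂ) (ι : Type*) [DecidableEq ι] (d : ι → ℕ)
    (W : Submodule ℂ (⨁ j : ι, Polynomial ℂ ⧸ Ideal.span {(X - C lam) ^ d j})) : Prop :=
  ∀ φ : (⨁ j : ι, Polynomial ℂ ⧸ Ideal.span {(X - C lam) ^ d j}) →ₗ[Polynomial ℂ]
      (⨁ j : ι, Polynomial ℂ ⧸ Ideal.span {(X - C lam) ^ d j}),
    ∀ w ∈ W, φ w ∈ W

namespace Stmt14Aux
variable (lam : ℂ)

theorem hp : Prime (X - C lam) := Polynomial.prime_X_sub_C lam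

theorem mk_mem_span {n b : ℕ} {z : Polynomial ℂ} (h : (X - C lam) ^ b ∣ z) :
    Ideal.Quotient.mk (Ideal.span {(X - C lam) ^ n}) z ∈
      Submodule.span (Polynomial ℂ)
        {Ideal.Quotient.mk (Ideal.span {(X - C lam) ^ n}) ((X - C lam) ^ b)} := by
  obtain ⟨c, rfl⟩ := h
  exact Submodule.mem_span_singleton.2 ⟨c, by rw [mul_comm]; rfl⟩

theorem le_of_mk_mem_span {n a b : ℕ} (hbn : b ≤ n)
    (h : Ideal.Quotient.mk (Ideal.span {(X - C lam) ^ n}) ((X - C lam) ^ a) ∈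
      Submodule.span (Polynomial ℂ)
        {Ideal.Quotient.mk (Ideal.span {(X - C lam) ^ n}) ((X - C lam) ^ b)}) :
    b ≤ a := by
  obtain ⟨r, hr⟩ := Submodule.mem_span_singleton.1 h
  have hr' : Ideal.Quotient.mk (Ideal.span {(X - C lam) ^ n}) (r * (X - C lam) ^ b)
      = Ideal.Quotient.mk (Ideal.span {(X - C lam) ^ n}) ((X - C lam) ^ a) := hr
  rw [Ideal.Quotient.eq] at hr'
  obtain ⟨s, hs⟩ := Ideal.mem_span_singleton.1 hr'
  have hdvd : (X - C lam) ^ b ∣ (X - C lam) ^ a := by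
    have : (X - C lam) ^ a = r * (X - C lam) ^ b - (X - C lam) ^ n * s := by
      rw [← hs]; ring
    rw [this]
    exact dvd_sub (Dvd.intro_left r rfl) ((pow_dvd_pow _ hbn).mul_right s)
  exact (pow_dvd_pow_iff (hp lam).ne_zero (hp lam).not_unit).1 hdvd

theorem submodule_classify {n : ℕ}
    (N : Submodule (Polynomial ℂ) (Polynomial ℂ ⧸ Ideal.span {(X - C lam) ^ n})) :
    ∃ c ≤ n, N = Submodule.span (Polynomial ℂ)
      {Ideal.Quotient.mk (Ideal.span {(X - C lam) ^ n}) ((X - C lam) ^ c)} := by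
  set mkq : Polynomial ℂ →ₗ[Polynomial ℂ] (Polynomial ℂ ⧸ Ideal.span {(X - C lam) ^ n}) :=
    Submodule.mkQ _ with hmkq
  set J : Ideal (Polynomial ℂ) := Submodule.comap mkq N with hJ
  obtain ⟨q, hq⟩ : Submodule.IsPrincipal J := inferInstance
  have hmem : (X - C lam) ^ n ∈ J := by
    show mkq ((X - C lam) ^ n) ∈ N
    have : mkq ((X - C lam) ^ n) = 0 := by
      show Ideal.Quotient.mk _ ((X - C lam) ^ n) = 0
      rw [Ideal.Quotient.eq_zero_iff_mem]
      exact Ideal.mem_span_singleton.2 dvd_rfl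
    rw [this]; exact N.zero_mem
  rw [hq] at hmem
  obtain ⟨r, hr⟩ := Submodule.mem_span_singleton.1 hmem
  have hqd : q ∣ (X - C lam) ^ n := ⟨r, by rw [← hr, smul_eq_mul, mul_comm]⟩
  obtain ⟨c, hcn, hassoc⟩ := (dvd_prime_pow (hp lam) n).1 hqd
  refine ⟨c, hcn, ?_⟩
  have hN : N = Submodule.map mkq J := by
    rw [hJ, Submodule.map_comap_eq_of_surjective (Submodule.mkQ_surjective _)]
  have hJspan : J = Ideal.span {(X - C lam) ^ c} := by
    rw [hq]; exact Ideal.span_singleton_eq_span_singleton.2 hassoc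
  rw [hN, hJspan]
  show Submodule.map mkq (Submodule.span (Polynomial ℂ) {(X - C lam) ^ c}) = _
  rw [Submodule.map_span, Set.image_singleton]
  rfl

theorem map_gen_mem {a b c c' : ℕ} (hc'b : c' ≤ b) (hle : c' ≤ c + (b - a))
    (g : (Polynomial ℂ ⧸ Ideal.span {(X - C lam) ^ a}) →ₗ[Polynomial ℂ]
      (Polynomial ℂ ⧸ Ideal.span {(X - C lam) ^ b})) :
    g (Ideal.Quotient.mk (Ideal.span {(X - C lam) ^ a}) ((X - C lam) ^ c)) ∈
      Submodule.span (Polynomial ℂ)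
        {Ideal.Quotient.mk (Ideal.span {(X - C lam) ^ b}) ((X - C lam) ^ c')} := by
  obtain ⟨s, hs⟩ := Ideal.Quotient.mk_surjective
    (I := Ideal.span {(X - C lam) ^ b}) (g (Ideal.Quotient.mk _ 1))
  have e1 : Ideal.Quotient.mk (Ideal.span {(X - C lam) ^ a}) ((X - C lam) ^ c)
      = (X - C lam) ^ c • Ideal.Quotient.mk (Ideal.span {(X - C lam) ^ a}) 1 := by
    show _ = Ideal.Quotient.mk (Ideal.span {(X - C lam) ^ a}) ((X - C lam) ^ c * 1)
    rw [mul_one]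
  have key : g (Ideal.Quotient.mk (Ideal.span {(X - C lam) ^ a}) ((X - C lam) ^ c))
      = Ideal.Quotient.mk (Ideal.span {(X - C lam) ^ b}) ((X - C lam) ^ c * s) := by
    rw [e1, map_smul, ← hs]; rfl
  rw [key]
  have hzero : Ideal.Quotient.mk (Ideal.span {(X - C lam) ^ b}) ((X - C lam) ^ a * s) = 0 := by
    have e2 : Ideal.Quotient.mk (Ideal.span {(X - C lam) ^ a}) ((X - C lam) ^ a * 1)
        = (0 : Polynomial ℂ ⧸ Ideal.span {(X - C lam) ^ a}) := by
      rw [Ideal.Quotient.eq_zero_iff_mem, mul_one]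
      exact Ideal.mem_span_singleton.2 dvd_rfl
    calc Ideal.Quotient.mk (Ideal.span {(X - C lam) ^ b}) ((X - C lam) ^ a * s)
        = (X - C lam) ^ a • Ideal.Quotient.mk (Ideal.span {(X - C lam) ^ b}) s := rfl
      _ = (X - C lam) ^ a • g (Ideal.Quotient.mk (Ideal.span {(X - C lam) ^ a}) 1) := by rw [hs]
      _ = g ((X - C lam) ^ a • Ideal.Quotient.mk (Ideal.span {(X - C lam) ^ a}) 1) :=
          (map_smul g _ _).symm
      _ = g (Ideal.Quotient.mk (Ideal.span {(X - C lam) ^ a}) ((X - C lam) ^ a * 1)) := rfl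
      _ = g 0 := by rw [e2]
      _ = 0 := map_zero g
  rw [Ideal.Quotient.eq_zero_iff_mem, Ideal.mem_span_singleton] at hzero
  have hdvd : (X - C lam) ^ c' ∣ (X - C lam) ^ c * s := by
    rcases le_total b a with hba | hab
    · have hc'c : c' ≤ c := by omega
      exact ((pow_dvd_pow _ hc'c).mul_right s)
    · obtain ⟨t, ht⟩ := hzero
      have hcancel : (X - C lam) ^ (b - a) ∣ s := by
        have hb : (X - C lam) ^ b = (X - C lam) ^ a * (X - C lam) ^ (b - a) := by
          rw [← pow_add]; congr 1; omega
        rw [hb, mul_assoc] at ht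
        exact ⟨t, mul_left_cancel₀ (pow_ne_zero a (hp lam).ne_zero) ht⟩
      obtain ⟨u, hu⟩ := hcancel
      refine ⟨(X - C lam) ^ (c + (b - a) - c') * u, ?_⟩
      rw [hu, ← mul_assoc, ← pow_add, ← mul_assoc, ← pow_add]
      congr 2
      omega
  obtain ⟨w, hw⟩ := hdvd
  exact Submodule.mem_span_singleton.2 ⟨w, by rw [hw, mul_comm]; rfl⟩


section DS
variable (ι : Type*) [Fintype ι] [DecidableEq ι] (d : ι → ℕ)

/-- the submodule with components p^(CC j) V_j -/
noncomputable def Wcc (CC : ι → ℕ) :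
    Submodule ℂ (⨁ j : ι, Polynomial ℂ ⧸ Ideal.span {(X - C lam) ^ d j}) where
  carrier := {v | ∀ j, v j ∈ Submodule.span (Polynomial ℂ)
    {Ideal.Quotient.mk (Ideal.span {(X - C lam) ^ d j}) ((X - C lam) ^ CC j)}}
  zero_mem' := by intro j; rw [DirectSum.zero_apply]; exact Submodule.zero_mem _
  add_mem' := by
    intro v w hv hw j
    rw [DirectSum.add_apply]
    exact Submodule.add_mem _ (hv j) (hw j)
  smul_mem' := by
    intro c v hv j
    rw [DirectSum.smul_apply]
    rw [← algebraMap_smul (Polynomial ℂ) c (v j)]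
    exact Submodule.smul_mem _ _ (hv j)

theorem mem_Wcc {CC : ι → ℕ} {v : ⨁ j : ι, Polynomial ℂ ⧸ Ideal.span {(X - C lam) ^ d j}} :
    v ∈ Wcc lam ι d CC ↔ ∀ j, v j ∈ Submodule.span (Polynomial ℂ)
      {Ideal.Quotient.mk (Ideal.span {(X - C lam) ^ d j}) ((X - C lam) ^ CC j)} := Iff.rfl


/-- the multiplication-by-p^(b-a) map between cyclic quotients -/
noncomputable def crossMap (a b : ℕ) :
    (Polynomial ℂ ⧸ Ideal.span {(X - C lam) ^ a}) →ₗ[Polynomial ℂ]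
      (Polynomial ℂ ⧸ Ideal.span {(X - C lam) ^ b}) :=
  Submodule.mapQ _ _ (LinearMap.lsmul (Polynomial ℂ) (Polynomial ℂ) ((X - C lam) ^ (b - a)))
    (by
      rw [Ideal.span_le]
      rintro x ⟨rfl⟩
      show (X - C lam) ^ (b - a) • (X - C lam) ^ a ∈ Ideal.span {(X - C lam) ^ b}
      rw [smul_eq_mul, ← pow_add]
      exact Ideal.mem_span_singleton.2 (pow_dvd_pow _ (by omega)))

theorem crossMap_mk (a b : ℕ) (z : Polynomial ℂ) :
    crossMap lam a b (Ideal.Quotient.mk (Ideal.span {(X - C lam) ^ a}) z)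
      = Ideal.Quotient.mk (Ideal.span {(X - C lam) ^ b}) ((X - C lam) ^ (b - a) * z) := by
  show crossMap lam a b (Submodule.Quotient.mk z) = _
  rw [crossMap, Submodule.mapQ_apply]
  rfl

theorem lof_gen_mem_Wcc_iff (CC : ι → ℕ) (h1 : ∀ j, CC j ≤ d j) (j : ι) (c : ℕ) :
    DirectSum.lof (Polynomial ℂ) ι (fun j => Polynomial ℂ ⧸ Ideal.span {(X - C lam) ^ d j}) j
      (Ideal.Quotient.mk (Ideal.span {(X - C lam) ^ d j}) ((X - C lam) ^ c)) ∈ Wcc lam ι d CC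
      ↔ CC j ≤ c := by
  rw [mem_Wcc]
  constructor
  · intro h
    have := h j
    rw [DirectSum.lof_apply] at this
    exact le_of_mk_mem_span lam (h1 j) this
  · intro h j'
    by_cases hjj : j' = j
    · subst hjj
      rw [DirectSum.lof_apply]
      exact mk_mem_span lam (pow_dvd_pow _ h)
    · rw [DirectSum.lof_eq_of, DirectSum.of_eq_of_ne _ _ _ hjj]
      exact Submodule.zero_mem _

theorem fullyInv_Wcc (CC : ι → ℕ) (h1 : ∀ j, CC j ≤ d j)
    (h2 : ∀ j j', CC j' ≤ CC j + (d j' - d j)) : FullyInv lam ι d (Wcc lam ι d CC) := by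
  intro φ w hw
  rw [mem_Wcc]
  intro j'
  rw [← DirectSum.sum_univ_of w, map_sum]
  have : (∑ j : ι, φ (DirectSum.of (fun j => Polynomial ℂ ⧸ Ideal.span {(X - C lam) ^ d j}) j (w j))) j'
      = ∑ j : ι, (φ (DirectSum.of (fun j => Polynomial ℂ ⧸ Ideal.span {(X - C lam) ^ d j}) j (w j))) j' := by
    exact DFinsupp.finset_sum_apply _ _ _
  rw [this]
  apply Submodule.sum_mem
  intro j _
  set g : (Polynomial ℂ ⧸ Ideal.span {(X - C lam) ^ d j}) →ₗ[Polynomial ℂ]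
      (Polynomial ℂ ⧸ Ideal.span {(X - C lam) ^ d j'}) :=
    (DirectSum.component (Polynomial ℂ) ι (fun j => Polynomial ℂ ⧸ Ideal.span {(X - C lam) ^ d j}) j').comp
      (φ.comp (DirectSum.lof (Polynomial ℂ) ι (fun j => Polynomial ℂ ⧸ Ideal.span {(X - C lam) ^ d j}) j))
    with hg
  have hgw : (φ (DirectSum.of (fun j => Polynomial ℂ ⧸ Ideal.span {(X - C lam) ^ d j}) j (w j))) j'
      = g (w j) := rfl
  rw [hgw]
  obtain ⟨r, hr⟩ := Submodule.mem_span_singleton.1 (hw j)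
  rw [← hr, map_smul]
  exact Submodule.smul_mem _ _ (map_gen_mem lam (h1 j') (h2 j j') g)


theorem exists_Wcc_of_fullyInv
    (W : Submodule ℂ (⨁ j : ι, Polynomial ℂ ⧸ Ideal.span {(X - C lam) ^ d j}))
    (hW : FullyInv lam ι d W) :
    ∃ CC : ι → ℕ, (∀ j, CC j ≤ d j) ∧ (∀ j j', CC j' ≤ CC j + (d j' - d j))
      ∧ W = Wcc lam ι d CC := by
  -- the component submodules
  have hsmul : ∀ (q : Polynomial ℂ) w, w ∈ W → q • w ∈ W := by
    intro q w hw
    exact hW (q • LinearMap.id) w hw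
  set N : ∀ j : ι, Submodule (Polynomial ℂ) (Polynomial ℂ ⧸ Ideal.span {(X - C lam) ^ d j}) :=
    fun j =>
    { carrier := {y | DirectSum.lof (Polynomial ℂ) ι
        (fun j => Polynomial ℂ ⧸ Ideal.span {(X - C lam) ^ d j}) j y ∈ W}
      zero_mem' := by
        show DirectSum.lof (Polynomial ℂ) ι _ j 0 ∈ W
        rw [map_zero]; exact W.zero_mem
      add_mem' := by
        intro y z hy hz
        show DirectSum.lof (Polynomial ℂ) ι _ j (y + z) ∈ W
        rw [map_add]; exact W.add_mem hy hz
      smul_mem' := by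
        intro q y hy
        show DirectSum.lof (Polynomial ℂ) ι _ j (q • y) ∈ W
        rw [map_smul]
        exact hsmul q _ hy } with hN
  have hmemN : ∀ (j : ι) y, y ∈ N j ↔ DirectSum.lof (Polynomial ℂ) ι
      (fun j => Polynomial ℂ ⧸ Ideal.span {(X - C lam) ^ d j}) j y ∈ W := fun _ _ => Iff.rfl
  choose CC hCle hCspan using fun j => submodule_classify lam (N j)
  refine ⟨CC, hCle, ?_, ?_⟩
  · -- the cross constraints
    intro j j'
    have hgen : Ideal.Quotient.mk (Ideal.span {(X - C lam) ^ d j}) ((X - C lam) ^ CC j) ∈ N j := by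
      rw [hCspan j]
      exact Submodule.mem_span_singleton_self _
    rw [hmemN] at hgen
    set φ : (⨁ j : ι, Polynomial ℂ ⧸ Ideal.span {(X - C lam) ^ d j}) →ₗ[Polynomial ℂ]
        (⨁ j : ι, Polynomial ℂ ⧸ Ideal.span {(X - C lam) ^ d j}) :=
      (DirectSum.lof (Polynomial ℂ) ι (fun j => Polynomial ℂ ⧸ Ideal.span {(X - C lam) ^ d j}) j').comp
        ((crossMap lam (d j) (d j')).comp
          (DirectSum.component (Polynomial ℂ) ι (fun j => Polynomial ℂ ⧸ Ideal.span {(X - C lam) ^ d j}) j))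
      with hφ
    have hφW := hW φ _ hgen
    have hval : φ (DirectSum.lof (Polynomial ℂ) ι
        (fun j => Polynomial ℂ ⧸ Ideal.span {(X - C lam) ^ d j}) j
        (Ideal.Quotient.mk (Ideal.span {(X - C lam) ^ d j}) ((X - C lam) ^ CC j)))
        = DirectSum.lof (Polynomial ℂ) ι
          (fun j => Polynomial ℂ ⧸ Ideal.span {(X - C lam) ^ d j}) j'
          (Ideal.Quotient.mk (Ideal.span {(X - C lam) ^ d j'})
            ((X - C lam) ^ ((d j' - d j) + CC j))) := by
      rw [hφ]
      simp only [LinearMap.coe_comp, Function.comp_apply]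
      rw [DirectSum.component.lof_self, crossMap_mk, ← pow_add]
    rw [hval] at hφW
    have hmem2 : Ideal.Quotient.mk (Ideal.span {(X - C lam) ^ d j'})
        ((X - C lam) ^ ((d j' - d j) + CC j)) ∈ N j' := hφW
    rw [hCspan j'] at hmem2
    have := le_of_mk_mem_span lam (hCle j') hmem2
    omega
  · -- W = Wcc CC
    ext v
    rw [mem_Wcc]
    constructor
    · intro hv j
      rw [← hCspan j]
      show DirectSum.lof (Polynomial ℂ) ι
        (fun j => Polynomial ℂ ⧸ Ideal.span {(X - C lam) ^ d j}) j (v j) ∈ W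
      have : DirectSum.lof (Polynomial ℂ) ι
          (fun j => Polynomial ℂ ⧸ Ideal.span {(X - C lam) ^ d j}) j (v j)
          = ((DirectSum.lof (Polynomial ℂ) ι (fun j => Polynomial ℂ ⧸ Ideal.span {(X - C lam) ^ d j}) j).comp
            (DirectSum.component (Polynomial ℂ) ι (fun j => Polynomial ℂ ⧸ Ideal.span {(X - C lam) ^ d j}) j)) v := rfl
      rw [this]
      exact hW _ v hv
    · intro hv
      rw [← DirectSum.sum_univ_of v]
      apply Submodule.sum_mem
      intro j _
      have hj : v j ∈ N j := by rw [hCspan j]; exact hv j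
      rw [hmemN] at hj
      rw [← DirectSum.lof_eq_of (Polynomial ℂ)]
      exact hj

end DS
end Stmt14Aux

/-- For `V = ⨁_j ℂ[x]/(p^{d j})` with distinct block sizes `i 0 < ⋯ < i (m-1)` and block
increments `Δ 0 = i 0`, `Δ k = i k - i (k-1)`, the number of fully invariant subspaces of
`V` equals `∏ k (1 + Δ k)`. -/
theorem stmt14 (lam : ℂ) (ι : Type*) [Fintype ι] [DecidableEq ι]
    (d : ι → ℕ) (hd : ∀ j, 1 ≤ d j)
    (m : ℕ) (i : Fin m → ℕ) (hmono : StrictMono i)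
    (hrange : ∀ j : ι, ∃ k : Fin m, d j = i k) (hsur : ∀ k : Fin m, ∃ j : ι, d j = i k)
    (Δ : Fin m → ℕ)
    (hΔ : ∀ k : Fin m, Δ k = if k.val = 0 then i k
      else i k - i ⟨k.val - 1, Nat.lt_of_le_of_lt (Nat.sub_le _ _) k.isLt⟩) :
    Nat.card {W : Submodule ℂ (⨁ j : ι, Polynomial ℂ ⧸ Ideal.span {(X - C lam) ^ d j}) //
        FullyInv lam ι d W} = ∏ k : Fin m, (1 + Δ k) := by
  classical
  choose kOf hkOf using hrange
  choose jOf hjOf using hsur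
  have hkj : ∀ k, kOf (jOf k) = k := by
    intro k
    apply hmono.injective
    rw [← hkOf (jOf k), hjOf k]
  -- partial sums
  set E : (∀ k : Fin m, Fin (1 + Δ k)) → ℕ → ℕ :=
    fun e n => if h : n < m then (e ⟨n, h⟩ : ℕ) else 0 with hE
  set S : (∀ k : Fin m, Fin (1 + Δ k)) → ℕ → ℕ :=
    fun e t => ∑ n ∈ Finset.range t, E e n with hS
  have hEbound : ∀ e n (h : n < m), E e n ≤ Δ ⟨n, h⟩ := by
    intro e n h
    rw [hE]
    simp only [dif_pos h]
    exact Nat.lt_succ_iff.1 ((e ⟨n, h⟩).isLt.trans_le (by omega))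
  have hSmono : ∀ e t t', t ≤ t' → S e t ≤ S e t' := by
    intro e t t' h
    exact Finset.sum_le_sum_of_subset (Finset.range_subset_range.2 h)
  have hSsucc : ∀ e t, S e (t + 1) = S e t + E e t := fun e t => Finset.sum_range_succ _ _
  have hLip : ∀ e a b (hab : a ≤ b) (ha : a < m) (hb : b < m),
      S e (b + 1) + i ⟨a, ha⟩ ≤ S e (a + 1) + i ⟨b, hb⟩ := by
    intro e a b hab ha hb
    induction b with
    | zero =>
      have h0 : a = 0 := by omega
      subst h0
      have : (⟨0, ha⟩ : Fin m) = ⟨0, hb⟩ := rfl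
      rw [this]
    | succ n IH =>
      have hn : n < m := by omega
      rcases Nat.lt_or_ge a (n+1) with han | han
      · have hIH := IH (by omega) hn
        have h1 := hSsucc e (n + 1)
        have h2 := hEbound e (n + 1) hb
        have h3 := hΔ ⟨n + 1, hb⟩
        rw [if_neg (by simp)] at h3
        have h4 : i (⟨n, hn⟩ : Fin m) ≤ i ⟨n + 1, hb⟩ := (hmono (by simp [Fin.mk_lt_mk])).le
        have h5 : (⟨n + 1 - 1, Nat.lt_of_le_of_lt (Nat.sub_le _ _) (⟨n+1,hb⟩ : Fin m).isLt⟩ : Fin m)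
            = ⟨n, hn⟩ := rfl
        rw [h5] at h3
        omega
      · have haeq : a = n + 1 := by omega
        subst haeq
        have : (⟨n + 1, ha⟩ : Fin m) = ⟨n + 1, hb⟩ := rfl
        rw [this]
  have hSle : ∀ e a (ha : a < m), S e (a + 1) ≤ i ⟨a, ha⟩ := by
    intro e a ha
    have h0 : 0 < m := by omega
    have := hLip e 0 a (by omega) h0 ha
    have h1 := hSsucc e 0
    have h1' : S e 0 = 0 := by rw [hS]; simp
    have h2 := hEbound e 0 h0
    have h3 := hΔ ⟨0, h0⟩
    rw [if_pos rfl] at h3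
    have h4 : i (⟨0, h0⟩ : Fin m) ≤ i ⟨a, ha⟩ := hmono.monotone (by simp [Fin.mk_le_mk])
    omega
  -- the component exponent function attached to e
  set CCe : (∀ k : Fin m, Fin (1 + Δ k)) → ι → ℕ :=
    fun e j => S e ((kOf j).val + 1) with hCCe
  have h1e : ∀ e j, CCe e j ≤ d j := by
    intro e j
    rw [hkOf j]
    exact hSle e (kOf j).val (kOf j).isLt
  have h2e : ∀ e j j', CCe e j' ≤ CCe e j + (d j' - d j) := by
    intro e j j'
    rcases le_total ((kOf j').val) ((kOf j).val) with h | h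
    · exact le_trans (hSmono e _ _ (by omega)) (Nat.le_add_right _ _)
    · have hthis := hLip e (kOf j).val (kOf j').val h (kOf j).isLt (kOf j').isLt
      have h4 : i (kOf j) ≤ i (kOf j') := hmono.monotone (by omega)
      show S e ((kOf j').val + 1) ≤ S e ((kOf j).val + 1) + (d j' - d j)
      rw [hkOf j, hkOf j']
      simp only [Fin.eta] at hthis
      omega
  set F : (∀ k : Fin m, Fin (1 + Δ k)) →
      {W : Submodule ℂ (⨁ j : ι, Polynomial ℂ ⧸ Ideal.span {(X - C lam) ^ d j}) //
        FullyInv lam ι d W} :=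
    fun e => ⟨Stmt14Aux.Wcc lam ι d (CCe e), Stmt14Aux.fullyInv_Wcc lam ι d (CCe e) (h1e e) (h2e e)⟩ with hF
  have hgen_mem : ∀ e (k : Fin m) c,
      DirectSum.lof (Polynomial ℂ) ι (fun j => Polynomial ℂ ⧸ Ideal.span {(X - C lam) ^ d j}) (jOf k)
      (Ideal.Quotient.mk (Ideal.span {(X - C lam) ^ d (jOf k)}) ((X - C lam) ^ c)) ∈ Stmt14Aux.Wcc lam ι d (CCe e)
      ↔ S e (k.val + 1) ≤ c := by
    intro e k c
    rw [Stmt14Aux.lof_gen_mem_Wcc_iff lam ι d (CCe e) (h1e e) (jOf k) c]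
    show S e ((kOf (jOf k)).val + 1) ≤ c ↔ _
    rw [hkj k]
  have hbij : Function.Bijective F := by
    constructor
    · intro e e' hee
      have hWeq : Stmt14Aux.Wcc lam ι d (CCe e) = Stmt14Aux.Wcc lam ι d (CCe e') := congrArg Subtype.val hee
      have hSeq : ∀ k : Fin m, S e (k.val + 1) = S e' (k.val + 1) := by
        intro k
        have hm1 : S e (k.val + 1) ≤ S e' (k.val + 1) := by
          rw [← hgen_mem e k, hWeq, hgen_mem e' k]
        have hm2 : S e' (k.val + 1) ≤ S e (k.val + 1) := by
          rw [← hgen_mem e' k, ← hWeq, hgen_mem e k]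
        omega
      funext k
      apply Fin.ext
      have hv : ∀ (f : ∀ k : Fin m, Fin (1 + Δ k)), (f k : ℕ) = E f k.val := by
        intro f
        rw [hE]
        simp only [dif_pos k.isLt, Fin.eta]
      rw [hv e, hv e']
      have ha' : S e (k.val + 1) = S e' (k.val + 1) := hSeq k
      rw [hSsucc, hSsucc] at ha'
      rcases Nat.eq_zero_or_pos k.val with h0 | h0
      · rw [h0] at ha' ⊢
        have z1 : S e 0 = 0 := by rw [hS]; simp
        have z2 : S e' 0 = 0 := by rw [hS]; simp
        omega
      · have hb' : S e (k.val - 1 + 1) = S e' (k.val - 1 + 1) := hSeq ⟨k.val - 1, by omega⟩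
        have hc : k.val - 1 + 1 = k.val := by omega
        rw [hc] at hb'
        omega
    · rintro ⟨W, hW⟩
      obtain ⟨CC, h1, h2, hWeq⟩ := Stmt14Aux.exists_Wcc_of_fullyInv lam ι d W hW
      have hfib : ∀ j j', d j = d j' → CC j = CC j' := by
        intro j j' hdd
        have ha := h2 j j'
        have hb := h2 j' j
        omega
      have hmonoCC : ∀ a b (ha : a < m) (hb : b < m), a ≤ b →
          CC (jOf ⟨a, ha⟩) ≤ CC (jOf ⟨b, hb⟩) := by
        intro a b ha hb hab
        have hx := h2 (jOf ⟨b, hb⟩) (jOf ⟨a, ha⟩)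
        rw [hjOf, hjOf] at hx
        have h4 : i (⟨a, ha⟩ : Fin m) ≤ i ⟨b, hb⟩ := hmono.monotone (by simp [Fin.mk_le_mk]; omega)
        omega
      set ef : Fin m → ℕ := fun k =>
        if k.val = 0 then CC (jOf k)
        else CC (jOf k) - CC (jOf ⟨k.val - 1, Nat.lt_of_le_of_lt (Nat.sub_le _ _) k.isLt⟩)
        with hef
      have hef0 : ∀ k : Fin m, k.val = 0 → ef k = CC (jOf k) := by
        intro k h0
        simp only [hef, if_pos h0]
      have hef1 : ∀ k : Fin m, k.val ≠ 0 → ef k = CC (jOf k) -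
          CC (jOf ⟨k.val - 1, Nat.lt_of_le_of_lt (Nat.sub_le _ _) k.isLt⟩) := by
        intro k h0
        simp only [hef, if_neg h0]
      have hbound : ∀ k : Fin m, ef k < 1 + Δ k := by
        intro k
        rcases Nat.eq_zero_or_pos k.val with h0 | h0
        · rw [hef0 k h0]
          have ha := h1 (jOf k)
          rw [hjOf] at ha
          have hb := hΔ k
          rw [if_pos h0] at hb
          omega
        · rw [hef1 k (by omega)]
          set k' : Fin m := ⟨k.val - 1, Nat.lt_of_le_of_lt (Nat.sub_le _ _) k.isLt⟩ with hk'
          have ha := h2 (jOf k') (jOf k)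
          rw [hjOf, hjOf] at ha
          have hb := hΔ k
          rw [if_neg (by omega)] at hb
          rw [← hk'] at hb
          have h4 : i k' ≤ i k := hmono.monotone (by rw [hk']; simp [Fin.le_def])
          omega
      set e : ∀ k : Fin m, Fin (1 + Δ k) := fun k => ⟨ef k, hbound k⟩ with he
      have hval : ∀ k : Fin m, (e k : ℕ) = ef k := fun k => rfl
      have hSe : ∀ n (hn : n < m), S e (n + 1) = CC (jOf ⟨n, hn⟩) := by
        intro n
        induction n with
        | zero =>
          intro hn
          rw [hSsucc]
          have h0 : S e 0 = 0 := by rw [hS]; simp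
          have h1' : E e 0 = (e ⟨0, hn⟩ : ℕ) := by rw [hE]; simp only [dif_pos hn]
          rw [h0, h1', hval, hef0 ⟨0, hn⟩ rfl]
          omega
        | succ n IH =>
          intro hn
          have hn' : n < m := by omega
          rw [hSsucc, IH hn']
          have h1' : E e (n+1) = (e ⟨n+1, hn⟩ : ℕ) := by rw [hE]; simp only [dif_pos hn]
          rw [h1', hval, hef1 ⟨n+1, hn⟩ (by simp)]
          have hmm := hmonoCC n (n+1) hn' hn (by omega)
          have hk5 : (⟨n + 1 - 1, Nat.lt_of_le_of_lt (Nat.sub_le _ _) (⟨n+1,hn⟩ : Fin m).isLt⟩ : Fin m)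
              = ⟨n, hn'⟩ := rfl
          rw [hk5]
          omega
      refine ⟨e, ?_⟩
      apply Subtype.ext
      show Stmt14Aux.Wcc lam ι d (CCe e) = W
      rw [hWeq]
      congr 1
      funext j
      show S e ((kOf j).val + 1) = CC j
      have hthis : S e ((kOf j).val + 1) = CC (jOf ⟨(kOf j).val, (kOf j).isLt⟩) :=
        hSe (kOf j).val (kOf j).isLt
      simp only [Fin.eta] at hthis
      rw [hthis]
      apply hfib
      rw [hjOf (kOf j), hkOf j]
  rw [← Nat.card_eq_of_bijective F hbij, Nat.card_pi]
  congr 1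
  funext k
  rw [Nat.card_eq_fintype_card, Fintype.card_fin]
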